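/- Let a, b > 0, set c = Real.sqrt (b/a), and let u(x) = A · Real.cos (c·x) + B · Real.sin (c·x) for constants A, B ∈ ℝ. Then for every x ∈ ℝ and every Δx with Real.sin (c·Δx/2) ≠ 0, the Mickens NSFD space scheme is exact: a · (u(x+Δx) − 2·u(x) + u(x−Δx)) / (ψ(Δx))² + b · u(x) = 0, where ψ(Δx) = 2 · Real.sqrt (a/b) · Real.sin (Real.sqrt (b/a) · Δx/2). -/

import Mathlib

theorem nsfd_space_scheme_exact (a b : ℝ) (ha : 0 < a) (hb : 0 < b) (A B : ℝ) (u : ℝ → ℝ)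
    (hu : ∀ x, u x = A * Real.cos (Real.sqrt (b / a) * x) + B * Real.sin (Real.sqrt (b / a) * x)) :
    ∀ x Δx : ℝ, Real.sin (Real.sqrt (b / a) * Δx / 2) ≠ 0 →
      a * (u (x + Δx) - 2 * u x + u (x - Δx)) /
          (2 * Real.sqrt (a / b) * Real.sin (Real.sqrt (b / a) * Δx / 2)) ^ 2
        + b * u x = 0 := by
  intro x Δx hs
  set c := Real.sqrt (b / a) with hc
  set s := Real.sin (c * Δx / 2) with hsdef
  have hcos : Real.cos (c * Δx) = 1 - 2 * s ^ 2 := by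
    rw [show c * Δx = 2 * (c * Δx / 2) by ring, Real.cos_two_mul', Real.cos_sq']; ring
  have hnum : u (x + Δx) - 2 * u x + u (x - Δx) = -4 * s ^ 2 * u x := by
    rw [hu (x + Δx), hu (x - Δx), hu x]
    rw [show c * (x + Δx) = c * x + c * Δx by ring,
        show c * (x - Δx) = c * x - c * Δx by ring,
        Real.cos_add, Real.cos_sub, Real.sin_add, Real.sin_sub, hcos]
    ring
  have hab : Real.sqrt (a / b) ^ 2 = a / b := Real.sq_sqrt (div_nonneg ha.le hb.le)
  rw [hnum]
  have hb' : (b : ℝ) ≠ 0 := hb.ne'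
  have ha' : (a : ℝ) ≠ 0 := ha.ne'
  field_simp [hs]
  have hba : b * (a / b) = a := by field_simp
  rw [hab, mul_assoc _ b, hba]
  ring
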